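/- Overwrite-record application is idempotent on suffixes: for any page p and record lists rs₁, rs₂, apply (rs₁ ++ rs₂) (apply rs₂' p) = apply (rs₁ ++ rs₂) p whenever every offset covered by some record in rs₂' is also covered by some record in rs₁ ++ rs₂. In particular apply rs (apply rs p) = apply rs p. -/

import Mathlib

/- Byte-granularity model: a page is a function from offsets to bytes; a
   record is a partial overwrite (off, len, data) within the page. -/

/-- A page of `n` bytes. -/
abbrev Page (n : ℕ) := Fin n → UInt8

/-- A partial-write record: bytes `[off, off+len)` get `data 0, …, data (len-1)`. -/
structure Rec (n : ℕ) where
  off  : ℕ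
  len  : ℕ
  data : ℕ → UInt8
  wf   : off + len ≤ n

/-- `r` covers offset `i`. -/
def covers {n : ℕ} (r : Rec n) (i : Fin n) : Prop :=
  r.off ≤ i.val ∧ i.val < r.off + r.len

/-- Apply one partial-write record to a page. -/
def applyRec {n : ℕ} (r : Rec n) (p : Page n) : Page n := fun i =>
  if r.off ≤ i.val ∧ i.val < r.off + r.len then r.data (i.val - r.off) else p i

/-- Apply a list of records in order (sequential overwrite application). -/
def applyRecs {n : ℕ} (rs : List (Rec n)) (p : Page n) : Page n :=
  rs.foldl (fun p r => applyRec r p) p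

/-- Offset `i` is covered by some record in `rs`. -/
def coveredBy {n : ℕ} (rs : List (Rec n)) (i : Fin n) : Prop :=
  ∃ r ∈ rs, covers r i

lemma applyRecs_not_covered {n : ℕ} (rs : List (Rec n)) (p : Page n) (i : Fin n)
    (h : ¬ coveredBy rs i) : applyRecs rs p i = p i := by
  induction rs generalizing p with
  | nil => rfl
  | cons r rs ih =>
    have hr : ¬ (r.off ≤ i.val ∧ i.val < r.off + r.len) := by
      intro hc; exact h ⟨r, List.mem_cons_self, hc⟩
    have hrs : ¬ coveredBy rs i := by
      rintro ⟨s, hs, hc⟩; exact h ⟨s, List.mem_cons_of_mem _ hs, hc⟩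
    simp only [applyRecs, List.foldl_cons]
    rw [show (List.foldl (fun p r => applyRec r p) (applyRec r p) rs) = applyRecs rs (applyRec r p) from rfl,
      ih _ hrs, applyRec, if_neg hr]

lemma applyRecs_congr_at {n : ℕ} (rs : List (Rec n)) (p q : Page n) (i : Fin n)
    (h : p i = q i) : applyRecs rs p i = applyRecs rs q i := by
  induction rs generalizing p q with
  | nil => exact h
  | cons r rs ih =>
    simp only [applyRecs, List.foldl_cons]
    apply ih
    simp only [applyRec]
    split <;> simp [h]

lemma applyRecs_covered {n : ℕ} (rs : List (Rec n)) (p q : Page n) (i : Fin n)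
    (h : coveredBy rs i) : applyRecs rs p i = applyRecs rs q i := by
  induction rs generalizing p q with
  | nil => exact absurd h (by rintro ⟨r, hr, -⟩; exact (List.not_mem_nil hr))
  | cons r rs ih =>
    simp only [applyRecs, List.foldl_cons]
    by_cases hc : coveredBy rs i
    · exact ih _ _ hc
    · obtain ⟨s, hs, hcs⟩ := h
      rcases List.mem_cons.1 hs with rfl | hs
      · apply applyRecs_congr_at
        simp only [applyRec]
        obtain ⟨h1, h2⟩ := hcs
        rw [if_pos ⟨h1, h2⟩, if_pos ⟨h1, h2⟩]
      · exact absurd ⟨s, hs, hcs⟩ hc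

/-- Overwrite-record application is idempotent on suffixes:
    if every offset covered by `rs₂'` is covered by `rs₁ ++ rs₂`, then
    applying `rs₁ ++ rs₂` after first applying `rs₂'` gives the same page as
    applying `rs₁ ++ rs₂` directly; in particular
    `apply rs (apply rs p) = apply rs p`. -/
theorem apply_idempotent_on_suffixes :
    (∀ (n : ℕ) (p : Page n) (rs₁ rs₂ rs₂' : List (Rec n)),
      (∀ i : Fin n, coveredBy rs₂' i → coveredBy (rs₁ ++ rs₂) i) →
      applyRecs (rs₁ ++ rs₂) (applyRecs rs₂' p) = applyRecs (rs₁ ++ rs₂) p) ∧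
    (∀ (n : ℕ) (rs : List (Rec n)) (p : Page n),
      applyRecs rs (applyRecs rs p) = applyRecs rs p) := by
  have main : ∀ (n : ℕ) (p : Page n) (rs₁ rs₂ rs₂' : List (Rec n)),
      (∀ i : Fin n, coveredBy rs₂' i → coveredBy (rs₁ ++ rs₂) i) →
      applyRecs (rs₁ ++ rs₂) (applyRecs rs₂' p) = applyRecs (rs₁ ++ rs₂) p := by
    intro n p rs₁ rs₂ rs₂' h
    funext i
    by_cases hc : coveredBy (rs₁ ++ rs₂) i
    · exact applyRecs_covered _ _ _ _ hc
    · have h2 : ¬ coveredBy rs₂' i := fun hx => hc (h i hx)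
      exact applyRecs_congr_at _ _ _ _ (applyRecs_not_covered _ _ _ h2)
  refine ⟨main, fun n rs p => ?_⟩
  have := main n p rs [] rs
  simpa using this
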